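/- Let A₁₆ be the 16 × 16 real matrix with entries (A₁₆)_{11} = 2, (A₁₆)_{ii} = 1 for 2 ≤ i ≤ 15, (A₁₆)_{i,i+1} = −1 for 1 ≤ i ≤ 14, (A₁₆)_{i,16} = 1/2 for 1 ≤ i ≤ 16, and 0 otherwise; let A₈ be the analogous 8 × 8 matrix and A₈ₓ₈ the 16 × 16 block-diagonal matrix with two copies of A₈. Then the lattices A₁₆·ℤ¹⁶ and A₈ₓ₈·ℤ¹⁶ are not congruent: there is no orthogonal 16 × 16 real matrix B such that B·(A₁₆·ℤ¹⁶) = A₈ₓ₈·ℤ¹⁶. Consequently, the associated flat tori ℝ¹⁶/(A₁₆ℤ¹⁶) and ℝ¹⁶/(A₈ₓ₈ℤ¹⁶) are not isometric. -/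

import Mathlib

open Matrix

/-- The basis matrix `A_n` of the lattice `E_n` (for `n = 8, 16`):
`(A)_{11} = 2`, `(A)_{ii} = 1` for `2 ≤ i ≤ n−1`, `(A)_{i,i+1} = −1` for
`1 ≤ i ≤ n−2`, `(A)_{i,n} = 1/2` for all `i`, and `0` otherwise (1-based indices). -/
noncomputable def milnorBasisMatrix (n : ℕ) : Matrix (Fin n) (Fin n) ℝ :=
  Matrix.of fun i j =>
    if (j : ℕ) = n - 1 then 1 / 2
    else if (i : ℕ) = 0 ∧ (j : ℕ) = 0 then 2
    else if (i : ℕ) = (j : ℕ) then 1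
    else if (j : ℕ) = (i : ℕ) + 1 then -1
    else 0

/-- The basis matrix of `E₈ × E₈`: block diagonal with two copies of `A₈`. -/
noncomputable def milnorBasisMatrix8x8 : Matrix (Fin 16) (Fin 16) ℝ :=
  Matrix.reindex finSumFinEquiv finSumFinEquiv
    (Matrix.fromBlocks (milnorBasisMatrix 8) 0 0 (milnorBasisMatrix 8))

/-! ### Auxiliary lemmas for the proof -/

/-- The integer part of the `16 × 16` Milnor matrix (all columns except the last). -/
def milnorERow (i j : ℕ) : ℤ :=
  if i = 0 ∧ j = 0 then 2 else if i = j then 1 else if j = i + 1 then -1 else 0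

lemma milnorA16_castSucc (i : Fin 16) (j : Fin 15) :
    milnorBasisMatrix 16 i (Fin.castSucc j) = ((milnorERow i j : ℤ) : ℝ) := by
  have hj : ((Fin.castSucc j : Fin 16) : ℕ) = (j : ℕ) := rfl
  have hj15 : (j : ℕ) ≠ 16 - 1 := by omega
  simp only [milnorBasisMatrix, Matrix.of_apply, milnorERow, hj, if_neg hj15]
  split_ifs <;> norm_num

lemma milnorA16_last (i : Fin 16) : milnorBasisMatrix 16 i (Fin.last 15) = 1 / 2 := by
  have h : ((Fin.last 15 : Fin 16) : ℕ) = 16 - 1 := rfl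
  simp only [milnorBasisMatrix, Matrix.of_apply, if_pos h]

/-- Every coordinate of a vector of `E₁₆` is an integer plus `m₁₅ / 2`. -/
lemma milnor_coords16 (m : Fin 16 → ℤ) (i : Fin 16) :
    ∃ k : ℤ, (milnorBasisMatrix 16).mulVec (fun j => (m j : ℝ)) i
      = (k : ℝ) + (m (Fin.last 15) : ℝ) / 2 := by
  refine ⟨∑ j : Fin 15, milnorERow i j * m (Fin.castSucc j), ?_⟩
  simp only [Matrix.mulVec, dotProduct]
  rw [Fin.sum_univ_castSucc]
  push_cast
  rw [Finset.sum_congr rfl fun j _ => by rw [milnorA16_castSucc]]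
  have hl : milnorBasisMatrix 16 i 15 = 1 / 2 := milnorA16_last i
  linear_combination ((m 15 : ℤ) : ℝ) * hl

/-- Any norm-2 vector (root) of `E₁₆` has integer coordinates. -/
lemma milnor_root16_int (m : Fin 16 → ℤ)
    (h2 : (milnorBasisMatrix 16).mulVec (fun j => (m j : ℝ)) ⬝ᵥ
          (milnorBasisMatrix 16).mulVec (fun j => (m j : ℝ)) = 2)
    (i : Fin 16) :
    ∃ k : ℤ, (milnorBasisMatrix 16).mulVec (fun j => (m j : ℝ)) i = (k : ℝ) := by
  set v := (milnorBasisMatrix 16).mulVec (fun j => (m j : ℝ)) with hv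
  rcases Int.even_or_odd (m (Fin.last 15)) with ⟨t, ht⟩ | ⟨t, ht⟩
  · obtain ⟨k, hk⟩ := milnor_coords16 m i
    exact ⟨k + t, by rw [hv, hk, ht]; push_cast; ring⟩
  · exfalso
    have hbound : ∀ i : Fin 16, (1:ℝ)/4 ≤ v i * v i := by
      intro i
      obtain ⟨k, hk⟩ := milnor_coords16 m i
      have hvi : v i = ((k + t : ℤ) : ℝ) + 1/2 := by rw [hv, hk, ht]; push_cast; ring
      rw [hvi]
      set a : ℤ := k + t
      rcases le_or_gt 0 a with h | h
      · have : (0:ℝ) ≤ (a:ℝ) := by exact_mod_cast h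
        nlinarith
      · have : (a:ℝ) ≤ -1 := by exact_mod_cast (by omega : a ≤ -1)
        nlinarith
    have h4 : (4:ℝ) ≤ v ⬝ᵥ v := by
      have hd : v ⬝ᵥ v = ∑ i, v i * v i := rfl
      rw [hd]
      calc (4:ℝ) = ∑ _i : Fin 16, (1:ℝ)/4 := by norm_num
        _ ≤ _ := Finset.sum_le_sum fun i _ => hbound i
    linarith

/-- Vectors with all-integer coordinates, as a `ℤ`-submodule of `ℝ¹⁶`. -/
def milnorIntVecs : Submodule ℤ (Fin 16 → ℝ) where
  carrier := {v | ∀ i, ∃ k : ℤ, v i = (k : ℝ)}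
  add_mem' := by
    rintro a b ha hb i
    obtain ⟨k, hk⟩ := ha i; obtain ⟨l, hl⟩ := hb i
    exact ⟨k + l, by simp [hk, hl]⟩
  zero_mem' := fun i => ⟨0, by simp⟩
  smul_mem' := by
    rintro c v hv i
    obtain ⟨k, hk⟩ := hv i
    exact ⟨c * k, by simp [Pi.smul_apply, hk, zsmul_eq_mul]⟩

/-- The set of roots (norm-2 lattice vectors) of the lattice `A·ℤ¹⁶`. -/
def milnorRootsOf (A : Matrix (Fin 16) (Fin 16) ℝ) : Set (Fin 16 → ℝ) :=
  {v | (∃ m : Fin 16 → ℤ, v = A.mulVec (fun j => (m j : ℝ))) ∧ v ⬝ᵥ v = 2}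

set_option maxHeartbeats 2000000 in
/-- Every column of `A₈ₓ₈` other than columns 0 and 8 is a root of `E₈ × E₈`. -/
lemma milnor_col_root (j : Fin 16) (h0 : j ≠ 0) (h8 : j ≠ (8 : Fin 16)) :
    milnorBasisMatrix8x8.mulVec (fun k => ((if k = j then 1 else 0 : ℤ) : ℝ))
      ∈ milnorRootsOf milnorBasisMatrix8x8 := by
  refine ⟨⟨fun k => if k = j then 1 else 0, rfl⟩, ?_⟩
  fin_cases j <;>
    first
      | exact absurd rfl h0
      | exact absurd rfl h8
      | norm_num [dotProduct, Matrix.mulVec, Fin.sum_univ_succ,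
          milnorBasisMatrix8x8, milnorBasisMatrix, Matrix.fromBlocks, finSumFinEquiv,
          Matrix.reindex_apply, Matrix.submatrix_apply, Fin.addCases, Fin.castLT,
          Fin.subNat, Sum.elim]

set_option maxHeartbeats 1000000 in
/-- `e₀ + e₁` (in the first block) is a root of `E₈ × E₈`. -/
lemma milnor_s1_root :
    milnorBasisMatrix8x8.mulVec (fun k => ((if (k : ℕ) ≤ 1 then 1 else 0 : ℤ) : ℝ))
      ∈ milnorRootsOf milnorBasisMatrix8x8 := by
  refine ⟨⟨fun k => if (k : ℕ) ≤ 1 then 1 else 0, rfl⟩, ?_⟩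
  norm_num [dotProduct, Matrix.mulVec, Fin.sum_univ_succ,
    milnorBasisMatrix8x8, milnorBasisMatrix, Matrix.fromBlocks, finSumFinEquiv,
    Matrix.reindex_apply, Matrix.submatrix_apply, Fin.addCases, Fin.castLT,
    Fin.subNat, Sum.elim]

set_option maxHeartbeats 1000000 in
/-- `e₈ + e₉` (in the second block) is a root of `E₈ × E₈`. -/
lemma milnor_s2_root :
    milnorBasisMatrix8x8.mulVec
        (fun k => ((if 8 ≤ (k : ℕ) ∧ (k : ℕ) ≤ 9 then 1 else 0 : ℤ) : ℝ))
      ∈ milnorRootsOf milnorBasisMatrix8x8 := by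
  refine ⟨⟨fun k => if 8 ≤ (k : ℕ) ∧ (k : ℕ) ≤ 9 then 1 else 0, rfl⟩, ?_⟩
  norm_num [dotProduct, Matrix.mulVec, Fin.sum_univ_succ,
    milnorBasisMatrix8x8, milnorBasisMatrix, Matrix.fromBlocks, finSumFinEquiv,
    Matrix.reindex_apply, Matrix.submatrix_apply, Fin.addCases, Fin.castLT,
    Fin.subNat, Sum.elim]

lemma milnor_cast_indicator (j : Fin 16) :
    (fun k => ((if k = j then 1 else 0 : ℤ) : ℝ)) = fun k => if k = j then (1:ℝ) else 0 := by
  funext k; split_ifs <;> norm_num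

/-- Decomposition of `A·x` as a combination of columns of `A`. -/
lemma milnor_mulVec_decomp (A : Matrix (Fin 16) (Fin 16) ℝ) (x : Fin 16 → ℝ) :
    A.mulVec x = ∑ j, x j • A.mulVec (fun k => if k = j then (1:ℝ) else 0) := by
  funext i
  simp only [Finset.sum_apply, Pi.smul_apply, Matrix.mulVec, dotProduct,
    smul_eq_mul, mul_ite, mul_one, mul_zero, Finset.sum_ite_eq', Finset.mem_univ, if_true]
  exact Finset.sum_congr rfl fun j _ => mul_comm _ _

/-- Every column of `A₈ₓ₈` lies in the `ℤ`-span of the roots of `E₈ × E₈`. -/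
lemma milnor_col_mem_span (j : Fin 16) :
    milnorBasisMatrix8x8.mulVec (fun k => if k = j then (1:ℝ) else 0)
      ∈ Submodule.span ℤ (milnorRootsOf milnorBasisMatrix8x8) := by
  by_cases hj0 : j = 0
  · subst hj0
    have hvec : (fun k : Fin 16 => if k = (0 : Fin 16) then (1:ℝ) else 0)
        = (fun k : Fin 16 => ((if (k : ℕ) ≤ 1 then 1 else 0 : ℤ) : ℝ))
          - (fun k : Fin 16 => ((if k = (1 : Fin 16) then 1 else 0 : ℤ) : ℝ)) := by
      funext k
      fin_cases k <;> norm_num [Fin.ext_iff]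
    rw [hvec, Matrix.mulVec_sub]
    exact sub_mem (Submodule.subset_span milnor_s1_root)
      (Submodule.subset_span (milnor_col_root 1 (by decide) (by decide)))
  · by_cases hj8 : j = (8 : Fin 16)
    · subst hj8
      have hvec : (fun k : Fin 16 => if k = (8 : Fin 16) then (1:ℝ) else 0)
          = (fun k : Fin 16 => ((if 8 ≤ (k : ℕ) ∧ (k : ℕ) ≤ 9 then 1 else 0 : ℤ) : ℝ))
            - (fun k : Fin 16 => ((if k = (9 : Fin 16) then 1 else 0 : ℤ) : ℝ)) := by
        have e8 : ((8 : Fin 16) : ℕ) = 8 := rfl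
        have e9 : ((9 : Fin 16) : ℕ) = 9 := rfl
        funext k
        fin_cases k <;> norm_num [Fin.ext_iff, e8, e9]
      rw [hvec, Matrix.mulVec_sub]
      exact sub_mem (Submodule.subset_span milnor_s2_root)
        (Submodule.subset_span (milnor_col_root 9 (by decide) (by decide)))
    · rw [← milnor_cast_indicator]
      exact Submodule.subset_span (milnor_col_root j hj0 hj8)

/-- Every vector of `E₈ × E₈` is a `ℤ`-combination of roots. -/
lemma milnor_lat2_sub_span (m : Fin 16 → ℤ) :
    milnorBasisMatrix8x8.mulVec (fun j => (m j : ℝ))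
      ∈ Submodule.span ℤ (milnorRootsOf milnorBasisMatrix8x8) := by
  rw [milnor_mulVec_decomp]
  refine Submodule.sum_mem _ fun j _ => ?_
  rw [Int.cast_smul_eq_zsmul]
  exact Submodule.smul_mem _ _ (milnor_col_mem_span j)

/-- An orthogonal matrix preserves the dot product. -/
lemma milnor_dot_preserved {B : Matrix (Fin 16) (Fin 16) ℝ} (hB : B.transpose * B = 1)
    (x y : Fin 16 → ℝ) : B.mulVec x ⬝ᵥ B.mulVec y = x ⬝ᵥ y := by
  calc B.mulVec x ⬝ᵥ B.mulVec y = ((B.mulVec x) ᵥ* B) ⬝ᵥ y := Matrix.dotProduct_mulVec _ _ _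
    _ = (B.transpose.mulVec (B.mulVec x)) ⬝ᵥ y := by rw [Matrix.mulVec_transpose]
    _ = x ⬝ᵥ y := by rw [Matrix.mulVec_mulVec, hB, Matrix.one_mulVec]

lemma milnor_mulVec_inj {B : Matrix (Fin 16) (Fin 16) ℝ} (hB : B.transpose * B = 1)
    {x y : Fin 16 → ℝ} (h : B.mulVec x = B.mulVec y) : x = y := by
  have h2 : B.transpose.mulVec (B.mulVec x) = B.transpose.mulVec (B.mulVec y) := by rw [h]
  simpa [Matrix.mulVec_mulVec, hB, Matrix.one_mulVec] using h2

/-- The lattices `E₁₆ = A₁₆·ℤ¹⁶` and `E₈ × E₈ = A₈ₓ₈·ℤ¹⁶` are not congruent: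
there is no orthogonal matrix `B` carrying one lattice onto the other.
Consequently the associated flat tori are not isometric. -/
theorem milnor_lattices_not_congruent :
    ¬ ∃ B : Matrix (Fin 16) (Fin 16) ℝ, B.transpose * B = 1 ∧
      (fun v : Fin 16 → ℝ => B.mulVec v) ''
          {v | ∃ m : Fin 16 → ℤ, v = (milnorBasisMatrix 16).mulVec (fun j => (m j : ℝ))}
        = {v | ∃ m : Fin 16 → ℤ, v = milnorBasisMatrix8x8.mulVec (fun j => (m j : ℝ))} := by
  rintro ⟨B, hB, himg⟩
  set L1 : Set (Fin 16 → ℝ) :=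
    {v | ∃ m : Fin 16 → ℤ, v = (milnorBasisMatrix 16).mulVec (fun j => (m j : ℝ))} with hL1
  set L2 : Set (Fin 16 → ℝ) :=
    {v | ∃ m : Fin 16 → ℤ, v = milnorBasisMatrix8x8.mulVec (fun j => (m j : ℝ))} with hL2
  -- the ℤ-linear map given by B
  set F : (Fin 16 → ℝ) →ₗ[ℤ] (Fin 16 → ℝ) :=
    LinearMap.restrictScalars ℤ (Matrix.mulVecLin B) with hF
  have hFapp : ∀ v, F v = B.mulVec v := fun v => rfl
  -- B maps roots of E₁₆ bijectively onto roots of E₈ × E₈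
  have hR : F '' milnorRootsOf (milnorBasisMatrix 16) = milnorRootsOf milnorBasisMatrix8x8 := by
    ext w
    constructor
    · rintro ⟨v, ⟨hv1, hv2⟩, rfl⟩
      refine ⟨?_, ?_⟩
      · have : B.mulVec v ∈ L2 := himg ▸ ⟨v, hv1, rfl⟩
        exact this
      · rw [hFapp, milnor_dot_preserved hB]; exact hv2
    · rintro ⟨hw1, hw2⟩
      have : w ∈ (fun v : Fin 16 → ℝ => B.mulVec v) '' L1 := himg ▸ hw1
      obtain ⟨v, hv, rfl⟩ := this
      exact ⟨v, ⟨hv, by rw [← milnor_dot_preserved hB v v]; exact hw2⟩, rfl⟩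
  -- the half-vector h ∈ E₁₆
  set h : Fin 16 → ℝ :=
    (milnorBasisMatrix 16).mulVec
      (fun j => ((if j = (15 : Fin 16) then 1 else 0 : ℤ) : ℝ)) with hh
  have hhL1 : h ∈ L1 := ⟨fun j => if j = (15 : Fin 16) then 1 else 0, rfl⟩
  have hBh : B.mulVec h ∈ L2 := himg ▸ ⟨h, hhL1, rfl⟩
  obtain ⟨m2, hm2⟩ := hBh
  have hBh_span : B.mulVec h ∈ Submodule.span ℤ (milnorRootsOf milnorBasisMatrix8x8) := by
    rw [hm2]; exact milnor_lat2_sub_span m2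
  -- pull back along B
  have hspan_eq : Submodule.span ℤ (milnorRootsOf milnorBasisMatrix8x8)
      = Submodule.map F (Submodule.span ℤ (milnorRootsOf (milnorBasisMatrix 16))) := by
    rw [← hR, Submodule.span_image]
  rw [hspan_eq] at hBh_span
  obtain ⟨v, hv_span, hv_eq⟩ := hBh_span
  have hBhv : B.mulVec h = B.mulVec v := by rw [← hFapp v, hv_eq]
  have hhv : h = v := milnor_mulVec_inj hB hBhv
  -- roots of E₁₆ have integer coordinates, hence so does h
  have hsub : milnorRootsOf (milnorBasisMatrix 16) ⊆ (milnorIntVecs : Set (Fin 16 → ℝ)) := by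
    rintro w ⟨⟨m, rfl⟩, h2⟩
    exact fun i => milnor_root16_int m h2 i
  have hv_int : v ∈ milnorIntVecs := Submodule.span_le.mpr hsub hv_span
  have hh_int : ∀ i, ∃ k : ℤ, h i = (k : ℝ) := hhv ▸ hv_int
  -- but h 0 = 1/2
  obtain ⟨k, hk⟩ := hh_int 0
  have hh0 : h 0 = 1 / 2 := by
    rw [hh]
    have h15 : ((15 : Fin 16) : ℕ) = 15 := rfl
    norm_num [Matrix.mulVec, dotProduct, Fin.sum_univ_succ, milnorBasisMatrix, h15]
  rw [hh0] at hk
  have : (2 * k : ℤ) = 1 := by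
    have : ((2 * k : ℤ) : ℝ) = 1 := by push_cast; linarith
    exact_mod_cast this
  omega
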